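/- Let k be a positive integer, α ∈ (0,1], (a,b) ⊆ ℝ an interval, f : (a,b) → ℝ continuous, and g ∈ C^{k,α}((a,b)). Assume |f(x)|^{k+α} = |g(x)| for every x ∈ (a,b) and g(x)·g'(x) ≠ 0 for every x ∈ (a,b). Set H = Höld_α(g^{(k)}, (a,b)) and ‖g'‖_∞ = ‖g'‖_{L^∞((a,b))}. Then f is differentiable on (a,b) and there exists a constant C₁(k), depending only on k, such that for every x ∈ (a,b): |f'(x)|^{k+α} ≤ C₁(k) · max{ H, ‖g'‖_∞ · [ (b-a) / ((x-a)(b-x)) ]^{k+α-1} }. -/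

import Mathlib

open Set

set_option maxHeartbeats 2000000

lemma iDW_isOpen {f : ℝ → ℝ} {s : Set ℝ} {x : ℝ} (n : ℕ)
    (hs : IsOpen s) (hx : x ∈ s) :
    iteratedDerivWithin n f s x = iteratedDeriv n f x := by
  rw [iteratedDerivWithin_eq_iteratedFDerivWithin, iteratedDeriv_eq_iteratedFDeriv,
    iteratedFDerivWithin_of_isOpen n hs hx]

lemma iD_diffAt {g : ℝ → ℝ} {s : Set ℝ} {x : ℝ} {k i : ℕ}
    (hs : IsOpen s) (hx : x ∈ s) (hg : ContDiffOn ℝ (k:ℕ∞) g s) (hik : i < k) :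
    DifferentiableAt ℝ (iteratedDeriv i g) x := by
  have hu : UniqueDiffOn ℝ s := hs.uniqueDiffOn
  have h1 : DifferentiableWithinAt ℝ (iteratedDerivWithin i g s) s x :=
    hg.differentiableOn_iteratedDerivWithin (by exact_mod_cast hik) hu x hx
  have h2 : DifferentiableAt ℝ (iteratedDerivWithin i g s) x :=
    h1.differentiableAt (hs.mem_nhds hx)
  have h3 : iteratedDerivWithin i g s =ᶠ[nhds x] iteratedDeriv i g := by
    filter_upwards [hs.mem_nhds hx] with y hy using iDW_isOpen i hs hy
  exact h3.symm.differentiableAt_iff.mpr h2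

lemma iDW_Icc {g : ℝ → ℝ} {s : Set ℝ} {c d : ℝ} {k : ℕ}
    (hs : IsOpen s) (hg : ContDiffOn ℝ (k:ℕ∞) g s) (hcd : c < d)
    (hsub : Icc c d ⊆ s) {i : ℕ} (hik : i ≤ k) :
    EqOn (iteratedDerivWithin i g (Icc c d)) (iteratedDeriv i g) (Icc c d) := by
  induction i with
  | zero => intro x hx; simp
  | succ n ih =>
    intro x hx
    have hn : n ≤ k := Nat.le_of_succ_le hik
    have hud : UniqueDiffWithinAt ℝ (Icc c d) x := (uniqueDiffOn_Icc hcd) x hx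
    rw [iteratedDerivWithin_succ, iteratedDeriv_succ]
    have hda : DifferentiableAt ℝ (iteratedDeriv n g) x :=
      iD_diffAt hs (hsub hx) hg (Nat.lt_of_succ_le hik)
    rw [derivWithin_congr (ih hn) (ih hn hx)]
    exact hda.derivWithin hud

lemma taylor_est_lt {g : ℝ → ℝ} {a b H α : ℝ} {n : ℕ}
    (hg : ContDiffOn ℝ ((n+1 : ℕ):ℕ∞) g (Ioo a b)) (hα : α ∈ Ioc (0:ℝ) 1) (hH : 0 ≤ H)
    (hHol : ∀ x ∈ Ioo a b, ∀ y ∈ Ioo a b,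
      |iteratedDeriv (n+1) g y - iteratedDeriv (n+1) g x| ≤ H * |y - x| ^ α)
    {x y : ℝ} (hx : x ∈ Ioo a b) (hy : y ∈ Ioo a b) (hxy : x < y) :
    |g y - ∑ i ∈ Finset.range (n+2), iteratedDeriv i g x * (y-x)^i / (Nat.factorial i)|
      ≤ H * (y-x) ^ ((n+1 : ℝ) + α) / (Nat.factorial (n+1)) := by
  have hsub : Icc x y ⊆ Ioo a b := Icc_subset_Ioo hx.1 hy.2
  have hfIcc : ContDiffOn ℝ (n:ℕ∞) g (Icc x y) :=
    (hg.of_le (by exact_mod_cast Nat.le_succ n)).mono hsub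
  have hEq := iDW_Icc (k := n+1) isOpen_Ioo hg hxy hsub (i := n) (Nat.le_succ n)
  have hf' : DifferentiableOn ℝ (iteratedDerivWithin n g (Icc x y)) (Ioo x y) := by
    intro z hz
    have hzI : z ∈ Icc x y := Ioo_subset_Icc_self hz
    have hda : DifferentiableAt ℝ (iteratedDeriv n g) z :=
      iD_diffAt isOpen_Ioo (hsub hzI) hg (Nat.lt_succ_self n)
    exact (hda.differentiableWithinAt).congr
      (fun w hw => hEq (Ioo_subset_Icc_self hw)) (hEq hzI)
  obtain ⟨ξ, hξ, hR⟩ := taylor_mean_remainder_lagrange hxy.ne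
    (by rw [Set.uIcc_of_le hxy.le]; exact hfIcc)
    (by rw [Set.uIcc_of_le hxy.le, Set.uIoo_of_le hxy.le]; exact hf')
  rw [Set.uIoo_of_le hxy.le] at hξ
  rw [Set.uIcc_of_le hxy.le] at hR
  have hT : taylorWithinEval g n (Icc x y) x y
      = ∑ i ∈ Finset.range (n+1), iteratedDeriv i g x * (y-x)^i / (Nat.factorial i) := by
    rw [taylor_within_apply]
    refine Finset.sum_congr rfl fun i hi => ?_
    rw [iDW_Icc (k := n+1) isOpen_Ioo hg hxy hsub
      (le_of_lt (Finset.mem_range.mp hi)) (left_mem_Icc.mpr hxy.le)]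
    simp [smul_eq_mul]; ring
  have hξI : ξ ∈ Icc x y := Ioo_subset_Icc_self hξ
  have hkey : g y - ∑ i ∈ Finset.range (n+2), iteratedDeriv i g x * (y-x)^i / (Nat.factorial i)
      = (iteratedDeriv (n+1) g ξ - iteratedDeriv (n+1) g x) * (y-x)^(n+1) / (Nat.factorial (n+1)) := by
    rw [Finset.sum_range_succ, ← hT]
    have h2 : iteratedDerivWithin (n+1) g (Icc x y) ξ = iteratedDeriv (n+1) g ξ :=
      iDW_Icc (k := n+1) isOpen_Ioo hg hxy hsub le_rfl hξI
    rw [h2] at hR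
    rw [show g y - (taylorWithinEval g n (Icc x y) x y
        + iteratedDeriv (n+1) g x * (y-x)^(n+1) / (Nat.factorial (n+1)))
      = (g y - taylorWithinEval g n (Icc x y) x y)
        - iteratedDeriv (n+1) g x * (y-x)^(n+1) / (Nat.factorial (n+1)) by ring, hR]
    ring
  rw [hkey]
  have hyx : (0:ℝ) < y - x := sub_pos.mpr hxy
  have h3 : |ξ - x| ^ α ≤ (y - x) ^ α := by
    apply Real.rpow_le_rpow (abs_nonneg _) _ hα.1.le
    rw [abs_of_nonneg (sub_nonneg.mpr hξI.1)]
    exact sub_le_sub_right hξI.2 x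
  have h4 : |iteratedDeriv (n+1) g ξ - iteratedDeriv (n+1) g x| ≤ H * (y-x) ^ α :=
    (hHol x hx ξ (hsub hξI)).trans (mul_le_mul_of_nonneg_left h3 hH)
  have e1 : |(iteratedDeriv (n+1) g ξ - iteratedDeriv (n+1) g x) * (y-x)^(n+1)
        / (Nat.factorial (n+1))|
      = |iteratedDeriv (n+1) g ξ - iteratedDeriv (n+1) g x| * (y-x)^(n+1)
        / (Nat.factorial (n+1)) := by
    rw [abs_div, abs_mul, abs_of_nonneg (by positivity : (0:ℝ) ≤ (y-x)^(n+1)),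
      abs_of_nonneg (by positivity : (0:ℝ) ≤ ((Nat.factorial (n+1) : ℝ)))]
  rw [e1]
  have e2 : H * (y-x) ^ ((n+1:ℝ)+α) / (Nat.factorial (n+1))
      = (H * (y-x)^α) * (y-x)^(n+1) / (Nat.factorial (n+1)) := by
    rw [mul_assoc, ← Real.rpow_natCast (y-x) (n+1), ← Real.rpow_add hyx]
    rw [show α + ((n+1:ℕ):ℝ) = ((n:ℝ)+1+α) by push_cast; ring]
  rw [e2]
  gcongr

lemma taylor_est {g : ℝ → ℝ} {a b H α : ℝ} {n : ℕ}
    (hg : ContDiffOn ℝ ((n+1 : ℕ):ℕ∞) g (Ioo a b)) (hα : α ∈ Ioc (0:ℝ) 1) (hH : 0 ≤ H)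
    (hHol : ∀ x ∈ Ioo a b, ∀ y ∈ Ioo a b,
      |iteratedDeriv (n+1) g y - iteratedDeriv (n+1) g x| ≤ H * |y - x| ^ α)
    {x y : ℝ} (hx : x ∈ Ioo a b) (hy : y ∈ Ioo a b) :
    |g y - ∑ i ∈ Finset.range (n+2), iteratedDeriv i g x * (y-x)^i / (Nat.factorial i)|
      ≤ H * |y-x| ^ ((n+1 : ℝ) + α) / (Nat.factorial (n+1)) := by
  rcases lt_trichotomy x y with hxy | rfl | hxy
  · rw [abs_of_pos (sub_pos.mpr hxy)]
    exact taylor_est_lt hg hα hH hHol hx hy hxy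
  · have h1 : ∑ i ∈ Finset.range (n+2), iteratedDeriv i g x * (x-x)^i / (Nat.factorial i)
        = g x := by
      rw [Finset.sum_range_succ']
      simp [zero_pow]
    rw [h1, sub_self, abs_zero, sub_self, abs_zero,
      Real.zero_rpow (by have h0 := hα.1; positivity : (n+1:ℝ)+α ≠ 0)]
    simp
  · -- reflection
    set g' : ℝ → ℝ := fun t => g (-t) with hg'def
    have hmaps : ∀ t ∈ Ioo (-b) (-a), -t ∈ Ioo a b := by
      intro t ht
      exact ⟨by linarith [ht.2], by linarith [ht.1]⟩
    have hg' : ContDiffOn ℝ ((n+1 : ℕ):ℕ∞) g' (Ioo (-b) (-a)) := by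
      have : ContDiff ℝ ((n+1 : ℕ):ℕ∞) (fun t : ℝ => -t) := contDiff_neg
      exact hg.comp this.contDiffOn hmaps
    have hHol' : ∀ u ∈ Ioo (-b) (-a), ∀ v ∈ Ioo (-b) (-a),
        |iteratedDeriv (n+1) g' v - iteratedDeriv (n+1) g' u| ≤ H * |v - u| ^ α := by
      intro u hu v hv
      have e1 := iteratedDeriv_comp_neg (n+1) g u
      have e2 := iteratedDeriv_comp_neg (n+1) g v
      rw [hg'def, e1, e2, smul_eq_mul, smul_eq_mul, ← mul_sub, abs_mul, abs_pow, abs_neg,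
        abs_one, one_pow, one_mul]
      have := hHol (-u) (hmaps u hu) (-v) (hmaps v hv)
      rwa [show (-v) - (-u) = -(v - u) by ring, abs_neg] at this
    have hx' : -x ∈ Ioo (-b) (-a) := ⟨by linarith [hx.2], by linarith [hx.1]⟩
    have hy' : -y ∈ Ioo (-b) (-a) := ⟨by linarith [hy.2], by linarith [hy.1]⟩
    have hlt : -x < -y := by linarith
    have key := taylor_est_lt hg' hα hH hHol' hx' hy' hlt
    have hsum : ∑ i ∈ Finset.range (n+2), iteratedDeriv i g' (-x) * ((-y) - (-x))^i
          / (Nat.factorial i)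
        = ∑ i ∈ Finset.range (n+2), iteratedDeriv i g x * (y-x)^i / (Nat.factorial i) := by
      refine Finset.sum_congr rfl fun i _ => ?_
      rw [hg'def, iteratedDeriv_comp_neg i g (-x), neg_neg, smul_eq_mul]
      have e3 : ((-y) - (-x))^i = (-1:ℝ)^i * (y-x)^i := by
        rw [show (-y) - (-x) = -(y-x) by ring, neg_pow]
      rw [e3]
      have e4 : ((-1:ℝ)^i) * ((-1:ℝ)^i) = 1 := by rw [← mul_pow]; norm_num
      field_simp
      calc ((-1:ℝ)^i)^2 * iteratedDeriv i g x * (y-x)^i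
          = ((-1:ℝ)^i * (-1:ℝ)^i) * (iteratedDeriv i g x * (y-x)^i) := by ring
        _ = iteratedDeriv i g x * (y-x)^i := by rw [e4, one_mul]
    have hgy : g' (-y) = g y := by show g (-(-y)) = g y; rw [neg_neg]
    rw [hgy, hsum] at key
    rw [show |y - x| = x - y by rw [abs_of_neg (by linarith : y - x < 0)]; ring]
    convert key using 3
    ring

lemma sign_dichotomy {h : ℝ → ℝ} {a b : ℝ}
    (hc : ContinuousOn h (Ioo a b)) (hne : ∀ x ∈ Ioo a b, h x ≠ 0) :
    (∀ x ∈ Ioo a b, 0 < h x) ∨ (∀ x ∈ Ioo a b, h x < 0) := by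
  by_contra hcon
  push_neg at hcon
  obtain ⟨⟨u, hu, hu2⟩, ⟨v, hv, hv2⟩⟩ := hcon
  have hun : h u < 0 := lt_of_le_of_ne hu2 (hne u hu)
  have hvp : 0 < h v := lt_of_le_of_ne hv2 (Ne.symm (hne v hv))
  rcases le_total u v with huv | huv
  · have hsub : Icc u v ⊆ Ioo a b := Icc_subset_Ioo hu.1 hv.2
    obtain ⟨z, hz, hz0⟩ := intermediate_value_Icc huv (hc.mono hsub) (⟨hun.le, hvp.le⟩ : (0:ℝ) ∈ Icc (h u) (h v))
    exact hne z (hsub hz) hz0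
  · have hsub : Icc v u ⊆ Ioo a b := Icc_subset_Ioo hv.1 hu.2
    obtain ⟨z, hz, hz0⟩ := intermediate_value_Icc' huv (hc.mono hsub) (⟨hun.le, hvp.le⟩ : (0:ℝ) ∈ Icc (h u) (h v))
    exact hne z (hsub hz) hz0

lemma vandermonde_coeffs (k : ℕ) (hk : 0 < k) :
    ∃ c : Fin (k+1) → ℝ, ∀ i : ℕ, i ≤ k →
      ∑ j : Fin (k+1), c j * (j : ℝ) ^ i = if i = 1 then 1 else 0 := by
  classical
  set V : Matrix (Fin (k+1)) (Fin (k+1)) ℝ := fun i j => (j : ℝ) ^ (i : ℕ) with hV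
  have hdet : V.det ≠ 0 := by
    have : V = (Matrix.vandermonde (fun j : Fin (k+1) => (j : ℝ))).transpose := by
      ext i j; simp [hV, Matrix.transpose_apply, Matrix.vandermonde]
    rw [this, Matrix.det_transpose, Matrix.det_vandermonde]
    apply Finset.prod_ne_zero_iff.mpr
    intro i _
    apply Finset.prod_ne_zero_iff.mpr
    intro j hj
    have : (i : ℕ) < (j : ℕ) := by simpa [Finset.mem_filter] using hj
    have : (i : ℝ) < (j : ℝ) := by exact_mod_cast this
    linarith
  have hinv : IsUnit V.det := isUnit_iff_ne_zero.mpr hdet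
  set e : Fin (k+1) → ℝ := Pi.single ⟨1, by omega⟩ 1 with he
  refine ⟨V⁻¹.mulVec e, ?_⟩
  intro i hik
  have h1 : V.mulVec (V⁻¹.mulVec e) = e := by
    rw [Matrix.mulVec_mulVec, Matrix.mul_nonsing_inv V hinv, Matrix.one_mulVec]
  have h2 := congrFun h1 ⟨i, by omega⟩
  rw [Matrix.mulVec, he] at h2
  simp only [dotProduct, hV] at h2
  rw [show ∑ j : Fin (k+1), V⁻¹.mulVec e j * (j:ℝ)^i
      = ∑ j : Fin (k+1), (j:ℝ)^i * V⁻¹.mulVec e j from Finset.sum_congr rfl fun j _ => mul_comm _ _]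
  rw [h2]
  by_cases h : i = 1
  · subst h; simp [Pi.single_apply]
  · rw [Pi.single_apply, if_neg, if_neg h]
    intro hcon
    apply h
    have := congrArg Fin.val hcon
    simpa using this

lemma key_bound {g : ℝ → ℝ} {a b H α : ℝ} {n : ℕ}
    (hg : ContDiffOn ℝ ((n+1 : ℕ):ℕ∞) g (Ioo a b)) (hα : α ∈ Ioc (0:ℝ) 1) (hH : 0 ≤ H)
    (hHol : ∀ x ∈ Ioo a b, ∀ y ∈ Ioo a b,
      |iteratedDeriv (n+1) g y - iteratedDeriv (n+1) g x| ≤ H * |y - x| ^ α)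
    {c : Fin (n+2) → ℝ} {A : ℝ}
    (hvdm : ∀ i : ℕ, i ≤ n+1 →
      ∑ j : Fin (n+2), c j * (j : ℝ) ^ i = if i = 1 then 1 else 0)
    (hA : ∑ j : Fin (n+2), |c j| ≤ A)
    {x t σ : ℝ} (hx : x ∈ Ioo a b) (ht : 0 < t) (hσ : |σ| = 1)
    (hpts : ∀ j : Fin (n+2), x + σ * j * t ∈ Ioo a b)
    (hdom : ∀ j : Fin (n+2), |g (x + σ * j * t)| ≤ |g x|) :
    t * |deriv g x| ≤ A * (|g x| + H * (((n:ℝ)+1) * t) ^ ((n+1 : ℝ) + α)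
      / (Nat.factorial (n+1))) := by
  set m : ℝ := (n+1 : ℝ) + α with hm
  set Q : ℝ := H * (((n:ℝ)+1) * t) ^ m / (Nat.factorial (n+1)) with hQ
  have hQ0 : 0 ≤ Q := by
    have : (0:ℝ) ≤ (((n:ℝ)+1) * t) ^ m := Real.rpow_nonneg (by positivity) _
    positivity
  set P : Fin (n+2) → ℝ := fun j =>
    ∑ i ∈ Finset.range (n+2), iteratedDeriv i g x * (σ * j * t)^i / (Nat.factorial i) with hP
  have hR : ∀ j : Fin (n+2), |g (x + σ * j * t) - P j| ≤ Q := by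
    intro j
    have h1 := taylor_est hg hα hH hHol hx (hpts j)
    rw [show x + σ * j * t - x = σ * j * t by ring] at h1
    refine h1.trans ?_
    rw [hQ]
    have hb : |σ * ((j:ℕ):ℝ) * t| ≤ ((n:ℝ)+1) * t := by
      rw [abs_mul, abs_mul, hσ, one_mul, abs_of_nonneg ht.le,
        abs_of_nonneg (Nat.cast_nonneg (j:ℕ))]
      have hj : ((j:ℕ):ℝ) ≤ (n:ℝ)+1 := by exact_mod_cast Nat.le_of_lt_succ j.isLt
      exact mul_le_mul_of_nonneg_right hj ht.le
    have hb2 : |σ * ((j:ℕ):ℝ) * t| ^ m ≤ (((n:ℝ)+1) * t) ^ m :=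
      Real.rpow_le_rpow (abs_nonneg _) hb (by have h0 := hα.1; rw [hm]; positivity)
    gcongr
  have hsum : ∑ j : Fin (n+2), c j * P j = σ * t * deriv g x := by
    rw [hP]
    simp only [Finset.mul_sum]
    rw [Finset.sum_comm]
    have hterm : ∀ i ∈ Finset.range (n+2),
        ∑ j : Fin (n+2), c j * (iteratedDeriv i g x * (σ * j * t)^i / (Nat.factorial i))
        = (iteratedDeriv i g x * (σ*t)^i / (Nat.factorial i))
            * ∑ j : Fin (n+2), c j * (j:ℝ)^i := by
      intro i _
      rw [Finset.mul_sum]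
      refine Finset.sum_congr rfl fun j _ => ?_
      rw [show σ * (j:ℝ) * t = (σ*t) * (j:ℝ) by ring, mul_pow]
      ring
    rw [Finset.sum_congr rfl hterm]
    rw [Finset.sum_eq_single 1]
    · rw [hvdm 1 (by omega), if_pos rfl, iteratedDeriv_one]
      simp [pow_one]
      ring
    · intro i hi hne
      have hi' : i ≤ n+1 := Nat.le_of_lt_succ (Finset.mem_range.mp hi)
      rw [hvdm i hi', if_neg hne, mul_zero]
    · intro h1
      exact absurd (Finset.mem_range.mpr (by omega)) h1
  have hid : σ * t * deriv g x
      = ∑ j : Fin (n+2), c j * g (x + σ * j * t)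
        - ∑ j : Fin (n+2), c j * (g (x + σ * j * t) - P j) := by
    rw [← hsum, ← Finset.sum_sub_distrib]
    refine Finset.sum_congr rfl fun j _ => ?_
    ring
  have habs : t * |deriv g x| = |σ * t * deriv g x| := by
    rw [abs_mul, abs_mul, hσ, one_mul, abs_of_nonneg ht.le]
  rw [habs, hid]
  have h2 : |∑ j : Fin (n+2), c j * g (x + σ * j * t)| ≤ (∑ j : Fin (n+2), |c j|) * |g x| := by
    refine (Finset.abs_sum_le_sum_abs _ _).trans ?_
    rw [Finset.sum_mul]
    refine Finset.sum_le_sum fun j _ => ?_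
    rw [abs_mul]
    exact mul_le_mul_of_nonneg_left (hdom j) (abs_nonneg _)
  have h3 : |∑ j : Fin (n+2), c j * (g (x + σ * j * t) - P j)|
      ≤ (∑ j : Fin (n+2), |c j|) * Q := by
    refine (Finset.abs_sum_le_sum_abs _ _).trans ?_
    rw [Finset.sum_mul]
    refine Finset.sum_le_sum fun j _ => ?_
    rw [abs_mul]
    exact mul_le_mul_of_nonneg_left (hR j) (abs_nonneg _)
  have hS0 : 0 ≤ ∑ j : Fin (n+2), |c j| := Finset.sum_nonneg fun j _ => abs_nonneg _
  calc |∑ j : Fin (n+2), c j * g (x + σ * j * t)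
        - ∑ j : Fin (n+2), c j * (g (x + σ * j * t) - P j)|
      ≤ (∑ j : Fin (n+2), |c j|) * |g x| + (∑ j : Fin (n+2), |c j|) * Q :=
        (abs_sub _ _).trans (add_le_add h2 h3)
    _ ≤ A * |g x| + A * Q := by
        have hA0 : 0 ≤ A := hS0.trans hA
        exact add_le_add (mul_le_mul_of_nonneg_right hA (abs_nonneg _))
          (mul_le_mul_of_nonneg_right hA hQ0)
    _ = A * (|g x| + Q) := by ring


/-- **Pointwise estimate on the derivative of the root (Proposition, part 1).**
Let `f` be continuous on `(a,b)` and `g ∈ C^{k,α}((a,b))` with `|f|^(k+α) = |g|` and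
`g·g' ≠ 0` on `(a,b)`; let `H` be an `α`-Hölder constant for `g^(k)` and `G` a bound
for `|g'|` on `(a,b)`. Then `f` is differentiable on `(a,b)` and, for a constant
`C₁(k)` depending only on `k`, for every `x ∈ (a,b)`:
`|f'(x)|^(k+α) ≤ C₁(k) · max { H, G · ((b-a)/((x-a)(b-x)))^(k+α-1) }`. -/
theorem pointwise_estimate_root_derivative (k : ℕ) (hk : 0 < k) :
    ∃ C₁ : ℝ, ∀ α : ℝ, α ∈ Set.Ioc (0 : ℝ) 1 → ∀ a b : ℝ, a < b →
      ∀ f g : ℝ → ℝ,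
      ContinuousOn f (Ioo a b) →
      ContDiffOn ℝ (k : ℕ∞) g (Ioo a b) →
      (∀ i : ℕ, i ≤ k → ∃ B : ℝ, ∀ x ∈ Ioo a b,
        |iteratedDerivWithin i g (Ioo a b) x| ≤ B) →
      ∀ H : ℝ, 0 ≤ H →
      (∀ x ∈ Ioo a b, ∀ y ∈ Ioo a b,
        |iteratedDerivWithin k g (Ioo a b) y - iteratedDerivWithin k g (Ioo a b) x|
          ≤ H * |y - x| ^ α) →
      ∀ G : ℝ, 0 ≤ G →
      (∀ x ∈ Ioo a b, |derivWithin g (Ioo a b) x| ≤ G) →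
      (∀ x ∈ Ioo a b, |f x| ^ ((k : ℝ) + α) = |g x|) →
      (∀ x ∈ Ioo a b, g x * derivWithin g (Ioo a b) x ≠ 0) →
      (∀ x ∈ Ioo a b, DifferentiableAt ℝ f x) ∧
      (∀ x ∈ Ioo a b, |deriv f x| ^ ((k : ℝ) + α) ≤
        C₁ * max H (G * ((b - a) / ((x - a) * (b - x))) ^ ((k : ℝ) + α - 1))) := by
  obtain ⟨n, rfl⟩ : ∃ n, k = n + 1 := ⟨k - 1, (Nat.succ_pred_eq_of_pos hk).symm⟩
  obtain ⟨c, hvdm⟩ := vandermonde_coeffs (n+1) (Nat.succ_pos n)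
  set A : ℝ := ∑ j : Fin (n+2), |c j| with hA
  have hA0 : 0 ≤ A := Finset.sum_nonneg fun j _ => abs_nonneg _
  set K : ℝ := A * (1 + ((n:ℝ)+1)^(n+2)) with hK
  have hK0 : 0 ≤ K := by positivity
  set Λ : ℝ := (max 1 (2*((n:ℝ)+1)*K))^(n+2) with hΛ
  have hΛbase : (1:ℝ) ≤ max 1 (2*((n:ℝ)+1)*K) := le_max_left 1 _
  have hΛ0 : 0 ≤ Λ := by positivity
  refine ⟨Λ, ?_⟩
  intro α hα a b hab f g hf hg _hbnd H hH hHol G hG hGbd hfg hne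
  set s := Ioo a b with hs
  have hso : IsOpen s := isOpen_Ioo
  set m : ℝ := ((n+1 : ℕ) : ℝ) + α with hm
  have hα0 : 0 < α := hα.1
  have hα1 : α ≤ 1 := hα.2
  have hm' : m = (n+1 : ℝ) + α := by rw [hm]; push_cast; ring
  have hm0 : 0 < m := by rw [hm']; positivity
  have hm1 : 1 < m := by rw [hm']; have : (0:ℝ) ≤ n := Nat.cast_nonneg n; linarith
  have hmle : m ≤ (n:ℝ)+2 := by rw [hm']; linarith
  -- basic facts
  have hHol' : ∀ x ∈ s, ∀ y ∈ s,
      |iteratedDeriv (n+1) g y - iteratedDeriv (n+1) g x| ≤ H * |y - x| ^ α := by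
    intro x hx y hy
    rw [← iDW_isOpen (n+1) hso hx, ← iDW_isOpen (n+1) hso hy]
    exact hHol x hx y hy
  have hgd : ∀ x ∈ s, DifferentiableAt ℝ g x := fun x hx =>
    (hg.differentiableOn (by simp)).differentiableAt
      (hso.mem_nhds hx)
  have hdW : ∀ x ∈ s, derivWithin g s x = deriv g x := fun x hx => derivWithin_of_isOpen hso hx
  have hgne : ∀ x ∈ s, g x ≠ 0 := fun x hx => left_ne_zero_of_mul (hne x hx)
  have hg'ne : ∀ x ∈ s, deriv g x ≠ 0 := fun x hx => by
    have h1 := right_ne_zero_of_mul (hne x hx); rwa [hdW x hx] at h1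
  have hGbd' : ∀ x ∈ s, |deriv g x| ≤ G := fun x hx => by
    rw [← hdW x hx]; exact hGbd x hx
  have hgc : ContinuousOn g s := hg.continuousOn
  have hg'c : ContinuousOn (deriv g) s := by
    have h1 := hg.continuousOn_derivWithin hso.uniqueDiffOn (by exact_mod_cast Nat.succ_le_succ (Nat.zero_le n))
    exact h1.congr fun x hx => (hdW x hx).symm
  have hfne : ∀ x ∈ s, f x ≠ 0 := by
    intro x hx h0
    have h1 := hfg x hx
    rw [h0, abs_zero, Real.zero_rpow (ne_of_gt hm0)] at h1
    exact hgne x hx (abs_eq_zero.mp h1.symm)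
  -- signs
  obtain ⟨εg, hεg2, hεgpos⟩ : ∃ e : ℝ, (e = 1 ∨ e = -1) ∧ ∀ x ∈ s, 0 < e * g x := by
    obtain hp | hn := sign_dichotomy hgc hgne
    · exact ⟨1, Or.inl rfl, fun x hx => by simpa using hp x hx⟩
    · exact ⟨-1, Or.inr rfl, fun x hx => by simpa using hn x hx⟩
  have hεg1 : |εg| = 1 := by rcases hεg2 with rfl | rfl <;> norm_num
  have hεgabs : ∀ x ∈ s, |g x| = εg * g x := by
    intro x hx
    rw [← abs_of_pos (hεgpos x hx), abs_mul, hεg1, one_mul]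
  obtain ⟨εd, hεd2, hεdmono⟩ : ∃ e : ℝ, (e = 1 ∨ e = -1) ∧
      ∀ x ∈ s, ∀ y ∈ s, x ≤ y → e * g x ≤ e * g y := by
    obtain hp | hn := sign_dichotomy hg'c hg'ne
    · refine ⟨1, Or.inl rfl, ?_⟩
      have hmono : StrictMonoOn g s := strictMonoOn_of_deriv_pos (convex_Ioo a b) hgc
        (fun z hz => hp z (by rwa [interior_Ioo] at hz))
      intro x hx y hy hxy
      rcases eq_or_lt_of_le hxy with rfl | h
      · exact le_refl _
      · simpa using (hmono hx hy h).le
    · refine ⟨-1, Or.inr rfl, ?_⟩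
      have hanti : StrictAntiOn g s := strictAntiOn_of_deriv_neg (convex_Ioo a b) hgc
        (fun z hz => hn z (by rwa [interior_Ioo] at hz))
      intro x hx y hy hxy
      rcases eq_or_lt_of_le hxy with rfl | h
      · exact le_refl _
      · simpa using (hanti hx hy h).le
  have hεd1 : |εd| = 1 := by rcases hεd2 with rfl | rfl <;> norm_num
  obtain ⟨εf, hεf1, hεf⟩ : ∃ e : ℝ, |e| = 1 ∧ ∀ x ∈ s, f x = e * |f x| := by
    obtain hp | hn := sign_dichotomy hf hfne
    · exact ⟨1, abs_one, fun x hx => by rw [one_mul, abs_of_pos (hp x hx)]⟩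
    · exact ⟨-1, by norm_num, fun x hx => by rw [abs_of_neg (hn x hx)]; ring⟩
  -- domination along the good direction
  have hdom_main : ∀ x ∈ s, ∀ y ∈ s, εg * εd * (y - x) ≤ 0 → |g y| ≤ |g x| := by
    intro x hx y hy hcond
    rw [hεgabs x hx, hεgabs y hy]
    rcases hεg2 with rfl | rfl <;> rcases hεd2 with rfl | rfl
    · have hyx : y ≤ x := by nlinarith
      have h2 := hεdmono y hy x hx hyx
      linarith
    · have hxy : x ≤ y := by nlinarith
      have h2 := hεdmono x hx y hy hxy
      linarith
    · have hxy : x ≤ y := by nlinarith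
      have h2 := hεdmono x hx y hy hxy
      linarith
    · have hyx : y ≤ x := by nlinarith
      have h2 := hεdmono y hy x hx hyx
      linarith
  -- the finite-difference bound, optimized form
  have hKB : ∀ x ∈ s, ∀ t : ℝ, 0 < t → ((n:ℝ)+1) * t < min (x - a) (b - x) →
      t * |deriv g x| ≤ A * (|g x| + H * (((n:ℝ)+1) * t) ^ m / (Nat.factorial (n+1))) := by
    intro x hx t ht htd
    set σ : ℝ := -(εg * εd) with hσ
    have hσ1 : |σ| = 1 := by rw [hσ, abs_neg, abs_mul, hεg1, hεd1]; norm_num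
    have hjb : ∀ j : Fin (n+2), |σ * ((j:ℕ):ℝ) * t| ≤ ((n:ℝ)+1) * t := by
      intro j
      rw [abs_mul, abs_mul, hσ1, one_mul, abs_of_nonneg ht.le,
        abs_of_nonneg (Nat.cast_nonneg (j:ℕ))]
      have hj : ((j:ℕ):ℝ) ≤ (n:ℝ)+1 := by exact_mod_cast Nat.le_of_lt_succ j.isLt
      exact mul_le_mul_of_nonneg_right hj ht.le
    have hpts : ∀ j : Fin (n+2), x + σ * ((j:ℕ):ℝ) * t ∈ s := by
      intro j
      have h1 := hjb j
      have h2 : min (x - a) (b - x) ≤ x - a := min_le_left _ _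
      have h3 : min (x - a) (b - x) ≤ b - x := min_le_right _ _
      have h4 := neg_abs_le (σ * ((j:ℕ):ℝ) * t)
      have h5 := le_abs_self (σ * ((j:ℕ):ℝ) * t)
      simp only [hs, mem_Ioo]
      constructor <;> nlinarith
    have hdom : ∀ j : Fin (n+2), |g (x + σ * ((j:ℕ):ℝ) * t)| ≤ |g x| := by
      intro j
      apply hdom_main x hx _ (hpts j)
      have hsq : εg * εd * (εg * εd) = 1 := by
        rcases hεg2 with rfl | rfl <;> rcases hεd2 with rfl | rfl <;> norm_num
      have heq : εg * εd * (x + σ * ((j:ℕ):ℝ) * t - x)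
          = -(εg * εd * (εg * εd)) * (((j:ℕ):ℝ) * t) := by
        rw [hσ]; ring
      rw [heq, hsq]
      have hjt : (0:ℝ) ≤ ((j:ℕ):ℝ) * t := by positivity
      linarith
    have hres := key_bound hg hα hH hHol' hvdm hA.ge hx ht hσ1 hpts hdom
    rw [hm']
    exact hres
  -- derivative formula for f
  have hφ : ∀ x ∈ s, HasDerivAt (fun y => εf * (εg * g y) ^ (1/m))
      (εf * ((εg * deriv g x) * (1/m) * (εg * g x) ^ (1/m - 1))) x := by
    intro x hx
    have h1 : HasDerivAt (fun y => εg * g y) (εg * deriv g x) x :=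
      ((hgd x hx).hasDerivAt).const_mul εg
    exact (h1.rpow_const (Or.inl (ne_of_gt (hεgpos x hx)))).const_mul εf
  have hfeq : ∀ x ∈ s, f x = εf * (εg * g x) ^ (1/m) := by
    intro x hx
    have h1 : |f x| = (εg * g x) ^ (1/m) := by
      rw [← hεgabs x hx, ← hfg x hx, ← Real.rpow_mul (abs_nonneg (f x)),
        mul_one_div_cancel (ne_of_gt hm0), Real.rpow_one]
    rw [hεf x hx, h1]
  -- conclude
  have hdiffAll : ∀ x ∈ s, DifferentiableAt ℝ f x := by
    intro x hx
    have hev : f =ᶠ[nhds x] (fun y => εf * (εg * g y) ^ (1/m)) := by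
      filter_upwards [hso.mem_nhds hx] with y hy using hfeq y hy
    exact hev.differentiableAt_iff.mpr (hφ x hx).differentiableAt
  refine ⟨hdiffAll, ?_⟩
  intro x hx
  have hev : f =ᶠ[nhds x] (fun y => εf * (εg * g y) ^ (1/m)) := by
    filter_upwards [hso.mem_nhds hx] with y hy using hfeq y hy
  have hder : deriv f x = εf * ((εg * deriv g x) * (1/m) * (εg * g x) ^ (1/m - 1)) := by
    rw [hev.deriv_eq, (hφ x hx).deriv]
  have hB0 : 0 < εg * g x := hεgpos x hx
  set B : ℝ := εg * g x with hB
  set u : ℝ := |deriv g x| with hu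
  have hu0 : 0 < u := abs_pos.mpr (hg'ne x hx)
  have huG : u ≤ G := hGbd' x hx
  have habs : |deriv f x| = u * (1/m) * B ^ (1/m - 1) := by
    rw [hder, abs_mul, hεf1, one_mul, abs_mul, abs_mul, abs_mul, hεg1, one_mul,
      abs_of_pos (by positivity : (0:ℝ) < 1/m),
      abs_of_pos (Real.rpow_pos_of_pos hB0 _), ← hu]
  have hstep : |deriv f x| ^ m ≤ u ^ m * B ^ (1 - m) := by
    rw [habs,
      Real.mul_rpow (by positivity) (Real.rpow_nonneg hB0.le _),
      ← Real.rpow_mul hB0.le,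
      show (1/m - 1) * m = 1 - m by field_simp]
    have h1 : u * (1/m) ≤ u :=
      mul_le_of_le_one_right hu0.le (by rw [div_le_one hm0]; exact hm1.le)
    exact mul_le_mul_of_nonneg_right
      (Real.rpow_le_rpow (by positivity) h1 hm0.le)
      (Real.rpow_nonneg hB0.le _)
  have hxa : 0 < x - a := sub_pos.mpr hx.1
  have hbx : 0 < b - x := sub_pos.mpr hx.2
  set d : ℝ := min (x - a) (b - x) with hd
  have hd0 : 0 < d := lt_min hxa hbx
  set D : ℝ := d / (2*((n:ℝ)+1)) with hD
  have hD0 : 0 < D := by rw [hD]; positivity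
  have hnD : ((n:ℝ)+1) * D = d / 2 := by rw [hD]; field_simp; try ring
  set W : ℝ := (b - a) / ((x - a) * (b - x)) with hW
  have hW0 : 0 < W := by
    rw [hW]
    exact div_pos (by linarith only [hab] : (0:ℝ) < b - a) (mul_pos hxa hbx)
  have h1W : 1/d ≤ W := by
    have hprod : (x-a)*(b-x) ≤ (b-a)*d := by
      rcases le_total (x-a) (b-x) with h | h
      · rw [hd, min_eq_left h]; nlinarith only [sq_nonneg (x-a)]
      · rw [hd, min_eq_right h]; nlinarith only [sq_nonneg (b-x)]
    rw [hW, div_le_div_iff₀ hd0 (by positivity)]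
    linarith only [hprod]
  have hBgx : |g x| = B := hεgabs x hx
  have hfact1 : (1:ℝ) ≤ (Nat.factorial (n+1) : ℝ) :=
    Nat.one_le_cast.mpr (Nat.one_le_iff_ne_zero.mpr (Nat.factorial_ne_zero _))
  have hpow3 : ((n:ℝ)+1) ^ m ≤ ((n:ℝ)+1) ^ (n+2 : ℕ) := by
    rw [← Real.rpow_natCast ((n:ℝ)+1) (n+2)]
    exact Real.rpow_le_rpow_of_exponent_le (by linarith only [Nat.cast_nonneg (α := ℝ) n])
      (by push_cast; push_cast at hmle; linarith only [hmle])
  set MX : ℝ := max 1 (2*((n:ℝ)+1)*K) with hMX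
  have hΛeq : Λ = MX ^ (n+2 : ℕ) := hΛ
  have hMX1 : (1:ℝ) ≤ MX := hΛbase
  have hMXpow : ∀ q : ℝ, 0 ≤ q → q ≤ m → MX ^ q ≤ Λ := by
    intro q hq0 hqm
    rw [hΛeq, ← Real.rpow_natCast MX (n+2)]
    exact Real.rpow_le_rpow_of_exponent_le hMX1
      (by push_cast; push_cast at hmle; linarith only [hmle, hqm])
  by_cases hcase : H * D ^ m ≤ B
  · -- interior-like regime
    have hKB1 := hKB x hx D hD0 (by rw [hnD]; linarith only [hd0])
    have h2 : (((n:ℝ)+1)*D) ^ m = ((n:ℝ)+1) ^ m * D ^ m :=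
      Real.mul_rpow (by positivity) hD0.le
    have h4 : H * (((n:ℝ)+1)*D) ^ m / (Nat.factorial (n+1)) ≤ ((n:ℝ)+1)^(n+2:ℕ) * B := by
      have hnum0 : 0 ≤ H * (((n:ℝ)+1)*D) ^ m :=
        mul_nonneg hH (Real.rpow_nonneg (by positivity) _)
      calc H * (((n:ℝ)+1)*D) ^ m / (Nat.factorial (n+1))
          ≤ H * (((n:ℝ)+1)*D) ^ m := div_le_self hnum0 hfact1
        _ = ((n:ℝ)+1) ^ m * (H * D ^ m) := by rw [h2]; ring
        _ ≤ ((n:ℝ)+1)^(n+2:ℕ) * B := by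
            apply mul_le_mul hpow3 hcase
              (mul_nonneg hH (Real.rpow_nonneg hD0.le _)) (by positivity)
    have h5 : D * u ≤ K * B := by
      rw [hBgx] at hKB1
      calc D * u ≤ A * (B + ((n:ℝ)+1)^(n+2:ℕ) * B) :=
            hKB1.trans (mul_le_mul_of_nonneg_left (add_le_add_right h4 B) hA0)
        _ = K * B := by rw [hK]; ring
    have hub : u ≤ 2*((n:ℝ)+1)*K * B / d := by
      have h6 : u ≤ K * B / D := by
        rw [le_div_iff₀ hD0]
        linarith only [h5]
      have h7 : K * B / D = 2*((n:ℝ)+1)*K * B / d := by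
        rw [hD]; field_simp
      rwa [h7] at h6
    have hVB0 : 0 ≤ 2*((n:ℝ)+1)*K * B / d := by positivity
    have humV : u ^ m ≤ (2*((n:ℝ)+1)*K * B / d) ^ (m-1) * G := by
      have e1 : u ^ (m-1) * u = u ^ m := by
        rw [← Real.rpow_add_one (ne_of_gt hu0)]
        congr 1; ring
      rw [← e1]
      exact mul_le_mul (Real.rpow_le_rpow hu0.le hub (by linarith only [hm1])) huG hu0.le
        (Real.rpow_nonneg hVB0 _)
    have hsplit : (2*((n:ℝ)+1)*K * B / d) ^ (m-1)
        = (2*((n:ℝ)+1)*K) ^ (m-1) * B ^ (m-1) * (1/d) ^ (m-1) := by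
      rw [show 2*((n:ℝ)+1)*K * B / d = (2*((n:ℝ)+1)*K) * B * (1/d) by ring,
        Real.mul_rpow (by positivity) (by positivity),
        Real.mul_rpow (by positivity) hB0.le]
    have hBB : B ^ (m-1) * B ^ (1-m) = 1 := by
      rw [← Real.rpow_add hB0]
      norm_num
    have hfinal : |deriv f x| ^ m
        ≤ (2*((n:ℝ)+1)*K) ^ (m-1) * (1/d) ^ (m-1) * G := by
      calc |deriv f x| ^ m ≤ u ^ m * B ^ (1-m) := hstep
        _ ≤ ((2*((n:ℝ)+1)*K * B / d) ^ (m-1) * G) * B ^ (1-m) :=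
            mul_le_mul_of_nonneg_right humV (Real.rpow_nonneg hB0.le _)
        _ = (2*((n:ℝ)+1)*K) ^ (m-1) * (1/d) ^ (m-1) * G * (B ^ (m-1) * B ^ (1-m)) := by
            rw [hsplit]; ring
        _ = (2*((n:ℝ)+1)*K) ^ (m-1) * (1/d) ^ (m-1) * G := by rw [hBB, mul_one]
    have hV1 : (2*((n:ℝ)+1)*K) ^ (m-1) ≤ Λ := by
      refine le_trans (Real.rpow_le_rpow (by positivity) (le_max_right 1 _)
        (by linarith only [hm1])) ?_
      exact hMXpow (m-1) (by linarith only [hm1]) (by linarith only [hm0])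
    have hd1 : (1/d) ^ (m-1) ≤ W ^ (m-1) :=
      Real.rpow_le_rpow (by positivity) h1W (by linarith only [hm1])
    calc |deriv f x| ^ m ≤ (2*((n:ℝ)+1)*K) ^ (m-1) * (1/d) ^ (m-1) * G := hfinal
      _ ≤ Λ * (W ^ (m-1)) * G := by
          apply mul_le_mul_of_nonneg_right _ hG
          exact mul_le_mul hV1 hd1 (Real.rpow_nonneg (by positivity) _) hΛ0
      _ = Λ * (G * W ^ (m-1)) := by ring
      _ ≤ Λ * max H (G * W ^ (m-1)) :=
          mul_le_mul_of_nonneg_left (le_max_right _ _) hΛ0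
  · -- Hölder regime
    push_neg at hcase
    have hHpos : 0 < H := by
      rcases hH.lt_or_eq with h | h
      · exact h
      · exfalso
        rw [← h, zero_mul] at hcase
        exact absurd hcase (not_lt.mpr hB0.le)
    have hBH0 : 0 < B / H := div_pos hB0 hHpos
    set r : ℝ := (B/H) ^ (1/m) with hr
    have hr0 : 0 < r := Real.rpow_pos_of_pos hBH0 _
    have hrm : r ^ m = B / H := by
      rw [hr, ← Real.rpow_mul hBH0.le, one_div_mul_cancel (ne_of_gt hm0), Real.rpow_one]
    have hrD : r < D := by
      by_contra hcon
      push_neg at hcon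
      have h1 : D ^ m ≤ r ^ m := Real.rpow_le_rpow hD0.le hcon hm0.le
      rw [hrm] at h1
      have h2 : H * D ^ m ≤ H * (B / H) := mul_le_mul_of_nonneg_left h1 hHpos.le
      have h3 : H * (B / H) = B := by field_simp
      rw [h3] at h2
      exact absurd h2 (not_le.mpr hcase)
    have hKB2 := hKB x hx r hr0 (by
      rw [← hd]
      calc ((n:ℝ)+1) * r < ((n:ℝ)+1) * D := by
            apply mul_lt_mul_of_pos_left hrD (by positivity)
        _ = d / 2 := hnD
        _ < d := by linarith only [hd0])
    rw [hBgx] at hKB2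
    have h2 : H * (((n:ℝ)+1)*r) ^ m = ((n:ℝ)+1) ^ m * B := by
      rw [Real.mul_rpow (by positivity) hr0.le, hrm]
      field_simp
    have h4 : H * (((n:ℝ)+1)*r) ^ m / (Nat.factorial (n+1)) ≤ ((n:ℝ)+1)^(n+2:ℕ) * B := by
      calc H * (((n:ℝ)+1)*r) ^ m / (Nat.factorial (n+1))
          ≤ H * (((n:ℝ)+1)*r) ^ m :=
            div_le_self (mul_nonneg hH (Real.rpow_nonneg (by positivity) _)) hfact1
        _ = ((n:ℝ)+1) ^ m * B := h2
        _ ≤ ((n:ℝ)+1)^(n+2:ℕ) * B := mul_le_mul_of_nonneg_right hpow3 hB0.le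
    have h5 : r * u ≤ K * B := by
      calc r * u ≤ A * (B + ((n:ℝ)+1)^(n+2:ℕ) * B) :=
            hKB2.trans (mul_le_mul_of_nonneg_left (add_le_add_right h4 B) hA0)
        _ = K * B := by rw [hK]; ring
    have hub : u ≤ K * B / r := by rw [le_div_iff₀ hr0]; linarith only [h5]
    have hKB0 : 0 ≤ K * B / r := by positivity
    have hum : u ^ m ≤ K ^ m * H * B ^ (m-1) := by
      calc u ^ m ≤ (K * B / r) ^ m := Real.rpow_le_rpow hu0.le hub hm0.le
        _ = (K * (B/r)) ^ m := by rw [mul_div_assoc]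
        _ = K ^ m * (B/r) ^ m := Real.mul_rpow hK0 (by positivity)
        _ = K ^ m * (B ^ m / r ^ m) := by
            rw [Real.div_rpow hB0.le hr0.le]
        _ = K ^ m * (B ^ m * H / B) := by
            rw [hrm, div_div_eq_mul_div]
        _ = K ^ m * H * (B ^ m / B) := by ring
        _ = K ^ m * H * B ^ (m-1) := by
            rw [Real.rpow_sub hB0, Real.rpow_one]
    have hBB : B ^ (m-1) * B ^ (1-m) = 1 := by
      rw [← Real.rpow_add hB0]; norm_num
    have hKm : K ^ m ≤ Λ := by
      refine le_trans (Real.rpow_le_rpow hK0 ?_ hm0.le) (hMXpow m hm0.le le_rfl)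
      refine le_trans ?_ (le_max_right 1 _)
      linarith only [mul_nonneg (Nat.cast_nonneg (α := ℝ) n) hK0, hK0]
    calc |deriv f x| ^ m ≤ u ^ m * B ^ (1-m) := hstep
      _ ≤ (K ^ m * H * B ^ (m-1)) * B ^ (1-m) :=
          mul_le_mul_of_nonneg_right hum (Real.rpow_nonneg hB0.le _)
      _ = K ^ m * H * (B ^ (m-1) * B ^ (1-m)) := by ring
      _ = K ^ m * H := by rw [hBB, mul_one]
      _ ≤ Λ * H := mul_le_mul_of_nonneg_right hKm hH
      _ ≤ Λ * max H (G * W ^ (m-1)) :=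
          mul_le_mul_of_nonneg_left (le_max_left _ _) hΛ0
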